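/- Fix an integer K ≥ 1, γ > 0, u ∈ ℝ, and reals ξ₁ > ξ₂ > … > ξ_K. For each integer N > K set q = e^{−γ/N} and κ_j = ⌊ u·N + ξ_j·√N ⌋ for j = 1, …, K. Then lim_{N→∞} N^{−K(K−1)/4} · ∏_{1 ≤ i < j ≤ K} ( q^{κ_i − i} − q^{κ_j − j} ) / ( q^{−i} − q^{−j} ) = e^{−γ u K(K−1)/2} · ∏_{1 ≤ i < j ≤ K} (ξ_i − ξ_j)/(j − i). -/

import Mathlib

open Filter
open scoped Topology

lemma tendsto_expm1_div : Tendsto (fun x : ℝ => (Real.exp x - 1)/x) (𝓝[≠] 0) (𝓝 1) := by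
  have h := Real.hasDerivAt_exp 0
  rw [hasDerivAt_iff_tendsto_slope] at h
  simpa [slope_fun_def, Real.exp_zero, div_eq_inv_mul] using h

lemma tendsto_inv_sqrt : Tendsto (fun N : ℕ => (Real.sqrt N)⁻¹) atTop (𝓝 0) := by
  have h : Tendsto (fun N : ℕ => Real.sqrt (N:ℝ)) atTop atTop := by
    apply tendsto_atTop_atTop.mpr
    intro b
    refine ⟨⌈b^2⌉₊, fun a ha => ?_⟩
    calc b ≤ Real.sqrt (b^2) := by rw [Real.sqrt_sq_eq_abs]; exact le_abs_self b
    _ ≤ Real.sqrt (a:ℝ) := Real.sqrt_le_sqrt (le_trans (Nat.le_ceil _) (by exact_mod_cast ha))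
  exact h.inv_tendsto_atTop

lemma tendsto_inv_nat : Tendsto (fun N : ℕ => ((N:ℝ))⁻¹) atTop (𝓝 0) :=
  tendsto_natCast_atTop_atTop.inv_tendsto_atTop

lemma tendsto_floor_div (u b : ℝ) :
    Tendsto (fun N : ℕ => ((⌊u*N + b*Real.sqrt N⌋:ℤ):ℝ)/N) atTop (𝓝 u) := by
  have hlow : Tendsto (fun N : ℕ => u + b*(Real.sqrt N)⁻¹ - ((N:ℝ))⁻¹) atTop (𝓝 (u + b*0 - 0)) :=
    ((tendsto_const_nhds.add (tendsto_const_nhds.mul tendsto_inv_sqrt)).sub tendsto_inv_nat)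
  have hup : Tendsto (fun N : ℕ => u + b*(Real.sqrt N)⁻¹) atTop (𝓝 (u + b*0)) :=
    tendsto_const_nhds.add (tendsto_const_nhds.mul tendsto_inv_sqrt)
  rw [show u + b*0 - 0 = u by ring] at hlow
  rw [show u + b*0 = u by ring] at hup
  apply tendsto_of_tendsto_of_tendsto_of_le_of_le' hlow hup
  · filter_upwards [eventually_ge_atTop 1] with N hN
    have hNpos : (0:ℝ) < N := by exact_mod_cast hN
    have hs : Real.sqrt N * Real.sqrt N = (N:ℝ) := Real.mul_self_sqrt hNpos.le
    have hspos : (0:ℝ) < Real.sqrt N := Real.sqrt_pos.mpr hNpos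
    have h1 : (u*N + b*Real.sqrt N - 1)/N ≤ ((⌊u*N + b*Real.sqrt N⌋:ℤ):ℝ)/N := by
      gcongr
      exact (Int.sub_one_lt_floor _).le
    calc u + b*(Real.sqrt N)⁻¹ - ((N:ℝ))⁻¹ = (u*N + b*Real.sqrt N - 1)/N := by
          field_simp
          linear_combination (-b)*hs
      _ ≤ _ := h1
  · filter_upwards [eventually_ge_atTop 1] with N hN
    have hNpos : (0:ℝ) < N := by exact_mod_cast hN
    have hs : Real.sqrt N * Real.sqrt N = (N:ℝ) := Real.mul_self_sqrt hNpos.le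
    have h1 : ((⌊u*N + b*Real.sqrt N⌋:ℤ):ℝ)/N ≤ (u*N + b*Real.sqrt N)/N := by
      gcongr
      exact Int.floor_le _
    calc ((⌊u*N + b*Real.sqrt N⌋:ℤ):ℝ)/N ≤ (u*N + b*Real.sqrt N)/N := h1
      _ = u + b*(Real.sqrt N)⁻¹ := by
          field_simp
          linear_combination b*hs

lemma tendsto_floor_diff (u a b : ℝ) :
    Tendsto (fun N : ℕ => (((⌊u*N + a*Real.sqrt N⌋ - ⌊u*N + b*Real.sqrt N⌋ :ℤ)):ℝ)/Real.sqrt N)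
      atTop (𝓝 (a-b)) := by
  have hlow : Tendsto (fun N : ℕ => (a-b) - (Real.sqrt N)⁻¹) atTop (𝓝 ((a-b) - 0)) :=
    tendsto_const_nhds.sub tendsto_inv_sqrt
  have hup : Tendsto (fun N : ℕ => (a-b) + (Real.sqrt N)⁻¹) atTop (𝓝 ((a-b) + 0)) :=
    tendsto_const_nhds.add tendsto_inv_sqrt
  rw [sub_zero] at hlow
  rw [add_zero] at hup
  apply tendsto_of_tendsto_of_tendsto_of_le_of_le' hlow hup
  · filter_upwards [eventually_ge_atTop 1] with N hN
    have hNpos : (0:ℝ) < N := by exact_mod_cast hN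
    have hspos : (0:ℝ) < Real.sqrt N := Real.sqrt_pos.mpr hNpos
    have h1 : ((a-b)*Real.sqrt N - 1)/Real.sqrt N
        ≤ (((⌊u*N + a*Real.sqrt N⌋ - ⌊u*N + b*Real.sqrt N⌋ :ℤ)):ℝ)/Real.sqrt N := by
      gcongr
      push_cast
      have h2 := (Int.sub_one_lt_floor (u*N + a*Real.sqrt N)).le
      have h3 := Int.floor_le (u*N + b*Real.sqrt N)
      nlinarith [h2, h3]
    calc (a-b) - (Real.sqrt N)⁻¹ = ((a-b)*Real.sqrt N - 1)/Real.sqrt N := by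
          field_simp
      _ ≤ _ := h1
  · filter_upwards [eventually_ge_atTop 1] with N hN
    have hNpos : (0:ℝ) < N := by exact_mod_cast hN
    have hspos : (0:ℝ) < Real.sqrt N := Real.sqrt_pos.mpr hNpos
    have h1 : (((⌊u*N + a*Real.sqrt N⌋ - ⌊u*N + b*Real.sqrt N⌋ :ℤ)):ℝ)/Real.sqrt N
        ≤ ((a-b)*Real.sqrt N + 1)/Real.sqrt N := by
      gcongr
      push_cast
      have h2 := Int.floor_le (u*N + a*Real.sqrt N)
      have h3 := (Int.sub_one_lt_floor (u*N + b*Real.sqrt N)).le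
      nlinarith [h2, h3]
    calc _ ≤ ((a-b)*Real.sqrt N + 1)/Real.sqrt N := h1
      _ = (a-b) + (Real.sqrt N)⁻¹ := by field_simp

lemma exp_zpow (t : ℝ) (n : ℤ) : (Real.exp t) ^ n = Real.exp (t * n) := by
  rw [← Real.rpow_intCast, ← Real.exp_mul]

lemma alg_identity (s B1 B2 E1 E2 X Y : ℝ) (hs : s ≠ 0) (hX : X ≠ 0) (hY : Y ≠ 0)
    (hB2 : B2 ≠ 0) (hE2 : E2 - 1 ≠ 0) :
    s⁻¹ * (B1 * E1 - B1) / (B2 * E2 - B2)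
      = B1 * B2⁻¹ * ((E1 - 1)/X) * ((E2 - 1)/Y)⁻¹ * (s⁻¹ * (X/Y)) := by
  have h2 : B2 * E2 - B2 = B2 * (E2 - 1) := by ring
  rw [h2]
  field_simp

lemma pair_limit (γ u a b : ℝ) (hγ : 0 < γ) (hab : b < a) (i j : ℕ) (hij : i < j) :
    Tendsto (fun N : ℕ =>
      (N:ℝ) ^ (-(1/2) : ℝ) *
        ((Real.exp (-γ/N)) ^ (⌊u*N + a * Real.sqrt N⌋ - (i:ℤ)) -
         (Real.exp (-γ/N)) ^ (⌊u*N + b * Real.sqrt N⌋ - (j:ℤ))) /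
        ((Real.exp (-γ/N)) ^ (-(i:ℤ)) - (Real.exp (-γ/N)) ^ (-(j:ℤ))))
      atTop (𝓝 (Real.exp (-γ*u) * ((a - b) / ((j:ℝ) - (i:ℝ))))) := by
  have hji : (0:ℝ) < (j:ℝ) - i := by
    have : (i:ℝ) < j := by exact_mod_cast hij
    linarith
  set d : ℕ → ℤ := fun N => ⌊u*N + a*Real.sqrt N⌋ - ⌊u*N + b*Real.sqrt N⌋ + ((j:ℤ) - i) with hd
  set x : ℕ → ℝ := fun N => -γ * ((d N : ℤ):ℝ) / N with hxdef
  set y : ℕ → ℝ := fun N => -γ * ((j:ℝ) - i) / N with hydef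
  set C : ℕ → ℝ := fun N => Real.exp (-γ * ((⌊u*N + b*Real.sqrt N⌋:ℤ):ℝ) / N) with hCdef
  set D : ℕ → ℝ := fun N => ((d N : ℤ):ℝ) / Real.sqrt N with hDdef
  -- limit of D
  have hD : Tendsto D atTop (𝓝 (a - b)) := by
    have h1 := tendsto_floor_diff u a b
    have h2 : Tendsto (fun N : ℕ => ((j:ℝ) - i) * (Real.sqrt N)⁻¹) atTop (𝓝 (((j:ℝ)-i)*0)) :=
      tendsto_const_nhds.mul tendsto_inv_sqrt
    have h3 := h1.add h2
    rw [mul_zero, add_zero] at h3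
    refine h3.congr (fun N => ?_)
    simp only [hDdef, hd]
    push_cast
    ring
  -- limit of x
  have hx0 : Tendsto x atTop (𝓝 0) := by
    have h1 : Tendsto (fun N : ℕ => -γ * (D N * (Real.sqrt N)⁻¹)) atTop (𝓝 (-γ * ((a-b)*0))) :=
      tendsto_const_nhds.mul (hD.mul tendsto_inv_sqrt)
    rw [mul_zero, mul_zero] at h1
    refine h1.congr (fun N => ?_)
    simp only [hDdef, hxdef]
    rcases Nat.eq_zero_or_pos N with h | h
    · simp [h]
    have hNpos : (0:ℝ) < N := by exact_mod_cast h
    have hs : Real.sqrt N * Real.sqrt N = (N:ℝ) := Real.mul_self_sqrt hNpos.le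
    have hspos : (0:ℝ) < Real.sqrt N := Real.sqrt_pos.mpr hNpos
    field_simp
    linear_combination (((d N : ℤ)):ℝ) * hs
  -- x eventually negative
  have hdpos : ∀ᶠ N : ℕ in atTop, 0 < ((d N : ℤ):ℝ) := by
    have h1 : ∀ᶠ N : ℕ in atTop, 0 < D N := hD.eventually (eventually_gt_nhds (by linarith))
    filter_upwards [h1, eventually_ge_atTop 1] with N h2 hN
    have hNpos : (0:ℝ) < N := by exact_mod_cast hN
    have hspos : (0:ℝ) < Real.sqrt N := Real.sqrt_pos.mpr hNpos
    have h3 : D N * Real.sqrt N = ((d N : ℤ):ℝ) := by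
      simp only [hDdef]
      exact div_mul_cancel₀ _ hspos.ne'
    nlinarith
  have hxne : ∀ᶠ N : ℕ in atTop, x N ≠ 0 := by
    filter_upwards [hdpos, eventually_ge_atTop 1] with N h1 hN
    have hNpos : (0:ℝ) < N := by exact_mod_cast hN
    have : x N < 0 := by
      simp only [hxdef]
      apply div_neg_of_neg_of_pos _ hNpos
      nlinarith
    exact this.ne
  -- limit of y
  have hy0 : Tendsto y atTop (𝓝 0) := by
    have h1 : Tendsto (fun N : ℕ => (-γ * ((j:ℝ) - i)) * ((N:ℝ))⁻¹) atTop
        (𝓝 ((-γ * ((j:ℝ) - i)) * 0)) := tendsto_const_nhds.mul tendsto_inv_nat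
    rw [mul_zero] at h1
    exact h1.congr (fun N => by simp only [hydef]; ring)
  have hyne : ∀ᶠ N : ℕ in atTop, y N ≠ 0 := by
    filter_upwards [eventually_ge_atTop 1] with N hN
    have hNpos : (0:ℝ) < N := by exact_mod_cast hN
    simp only [hydef]
    have : -γ * ((j:ℝ) - i) < 0 := by nlinarith
    exact (div_neg_of_neg_of_pos this hNpos).ne
  -- limit of C
  have hC : Tendsto C atTop (𝓝 (Real.exp (-γ*u))) := by
    have h1 : Tendsto (fun N : ℕ => -γ * (((⌊u*N + b*Real.sqrt N⌋:ℤ):ℝ)/N)) atTop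
        (𝓝 (-γ * u)) := tendsto_const_nhds.mul (tendsto_floor_div u b)
    exact (Real.continuous_exp.tendsto _).comp (h1.congr (fun N => by rw [mul_div_assoc]))
  -- exp slope limits
  have hE1 : Tendsto (fun N => (Real.exp (x N) - 1) / x N) atTop (𝓝 1) := by
    apply Tendsto.comp tendsto_expm1_div
    rw [tendsto_nhdsWithin_iff]
    exact ⟨hx0, hxne⟩
  have hE2 : Tendsto (fun N => ((Real.exp (y N) - 1) / y N)⁻¹) atTop (𝓝 1) := by
    have h1 : Tendsto (fun N => (Real.exp (y N) - 1) / y N) atTop (𝓝 1) := by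
      apply Tendsto.comp tendsto_expm1_div
      rw [tendsto_nhdsWithin_iff]
      exact ⟨hy0, hyne⟩
    simpa using h1.inv₀ one_ne_zero
  -- combined limit
  have hcomb : Tendsto (fun N => C N * ((Real.exp (x N) - 1) / x N) *
      ((Real.exp (y N) - 1) / y N)⁻¹ * (D N / ((j:ℝ) - i))) atTop
      (𝓝 (Real.exp (-γ*u) * 1 * 1 * ((a-b) / ((j:ℝ) - i)))) :=
    ((hC.mul hE1).mul hE2).mul (hD.div_const _)
  rw [mul_one, mul_one] at hcomb
  refine Tendsto.congr' ?_ hcomb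
  -- eventual equality
  filter_upwards [hdpos, hxne, hyne, eventually_ge_atTop 1] with N hdN hxN hyN hN
  have hNpos : (0:ℝ) < N := by exact_mod_cast hN
  have hspos : (0:ℝ) < Real.sqrt N := Real.sqrt_pos.mpr hNpos
  have hs : Real.sqrt N * Real.sqrt N = (N:ℝ) := Real.mul_self_sqrt hNpos.le
  have hrpow : (N:ℝ) ^ (-(1/2) : ℝ) = (Real.sqrt N)⁻¹ := by
    rw [Real.rpow_neg hNpos.le, ← Real.sqrt_eq_rpow]
  have hkey : D N / ((j:ℝ) - i) = (Real.sqrt N)⁻¹ * (x N / y N) := by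
    simp only [hDdef, hxdef, hydef]
    field_simp
  have hq : ∀ n : ℤ, Real.exp (-γ/(N:ℝ)) ^ n = Real.exp ((-γ/(N:ℝ)) * n) :=
    fun n => exp_zpow _ n
  rw [hq, hq, hq, hq, hrpow, hkey]
  have e1 : (-γ/(N:ℝ)) * ((⌊u*N + a*Real.sqrt N⌋ - (i:ℤ) : ℤ):ℝ)
      = (-γ/(N:ℝ)) * ((⌊u*N + b*Real.sqrt N⌋ - (j:ℤ) : ℤ):ℝ) + x N := by
    simp only [hxdef, hd]
    push_cast
    field_simp
    ring
  have e2 : (-γ/(N:ℝ)) * ((-(i:ℤ) : ℤ):ℝ) = (-γ/(N:ℝ)) * ((-(j:ℤ) : ℤ):ℝ) + y N := by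
    simp only [hydef]
    push_cast
    field_simp
    ring
  rw [e1, e2, Real.exp_add, Real.exp_add]
  have e3 : C N = Real.exp ((-γ/(N:ℝ)) * ((⌊u*N + b*Real.sqrt N⌋ - (j:ℤ) : ℤ):ℝ))
      * (Real.exp ((-γ/(N:ℝ)) * ((-(j:ℤ) : ℤ):ℝ)))⁻¹ := by
    simp only [hCdef]
    rw [← Real.exp_neg, ← Real.exp_add]
    congr 1
    push_cast
    field_simp
    ring
  rw [e3]
  have hEy : Real.exp (y N) - 1 ≠ 0 := by
    rw [sub_ne_zero]
    intro h
    exact hyN (Real.exp_injective (h.trans Real.exp_zero.symm))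
  exact (alg_identity _ _ _ _ _ _ _ hspos.ne' hxN hyN (Real.exp_pos _).ne' hEy).symm
lemma card_pairs (K : ℕ) :
    K * (K - 1) = 2 * (Finset.univ.filter (fun p : Fin K × Fin K => p.1 < p.2)).card := by
  classical
  have hST : (Finset.univ.filter (fun p : Fin K × Fin K => p.1 < p.2)).card
      = (Finset.univ.filter (fun p : Fin K × Fin K => p.2 < p.1)).card := by
    refine Finset.card_bij' (fun p _ => (p.2, p.1)) (fun p _ => (p.2, p.1)) ?_ ?_ ?_ ?_ <;>
      intro p hp <;>
      simp only [Finset.mem_filter, Finset.mem_univ, true_and] at hp ⊢ <;>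
      first | exact hp | rfl
  have hdisj : Disjoint (Finset.univ.filter (fun p : Fin K × Fin K => p.1 < p.2))
      (Finset.univ.filter (fun p : Fin K × Fin K => p.2 < p.1)) := by
    rw [Finset.disjoint_left]
    intro p hp hq
    simp only [Finset.mem_filter, Finset.mem_univ, true_and] at hp hq
    exact absurd (hp.trans hq) (lt_irrefl _)
  have hunion : (Finset.univ.filter (fun p : Fin K × Fin K => p.1 < p.2))
      ∪ (Finset.univ.filter (fun p : Fin K × Fin K => p.2 < p.1)) = Finset.univ.offDiag := by
    rw [show (Finset.univ : Finset (Fin K)).offDiag = Finset.univ.filter (fun p : Fin K × Fin K => p.1 ≠ p.2) by ext p; simp [Finset.mem_offDiag], ← Finset.filter_or]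
    apply Finset.filter_congr
    intro p _
    simp [lt_or_lt_iff_ne]
  have hcard : (Finset.univ.filter (fun p : Fin K × Fin K => p.1 < p.2)).card
      + (Finset.univ.filter (fun p : Fin K × Fin K => p.2 < p.1)).card = K * K - K := by
    rw [← Finset.card_union_of_disjoint hdisj, hunion, Finset.offDiag_card]
    simp [Finset.card_univ]
  have hKK : K * (K - 1) = K * K - K := by
    cases K with
    | zero => simp
    | succ k =>
      rw [Nat.succ_sub_one]
      exact (Nat.sub_eq_of_eq_add (by ring)).symm
  rw [hKK, ← hcard, ← hST, two_mul]

/-- asymptotics of the principal specialization of the Schur polynomial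
`s_κ(1,q,…,q^{K−1}) = ∏_{1≤i<j≤K} (q^{κ_i−i} − q^{κ_j−j})/(q^{−i} − q^{−j})` when
`q = e^{−γ/N}` and `κ_j = ⌊uN + ξ_j √N⌋` (here `p : Fin K` represents the 1-based
index `p+1`). -/
theorem schur_prefactor_asymptotics (K : ℕ) (hK : 1 ≤ K) (γ u : ℝ) (hγ : 0 < γ)
    (ξ : Fin K → ℝ) (hξ : ∀ i j : Fin K, i < j → ξ j < ξ i) :
    Tendsto (fun N : ℕ =>
      (N:ℝ) ^ (-(((K*(K-1) : ℕ) : ℝ))/4) *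
        ∏ p ∈ Finset.univ.filter (fun p : Fin K × Fin K => p.1 < p.2),
          ((Real.exp (-γ/N)) ^ (⌊u*N + ξ p.1 * Real.sqrt N⌋ - (((p.1:ℕ)+1 : ℕ) : ℤ)) -
            (Real.exp (-γ/N)) ^ (⌊u*N + ξ p.2 * Real.sqrt N⌋ - (((p.2:ℕ)+1 : ℕ) : ℤ))) /
          ((Real.exp (-γ/N)) ^ (-((((p.1:ℕ)+1 : ℕ)) : ℤ)) -
            (Real.exp (-γ/N)) ^ (-((((p.2:ℕ)+1 : ℕ)) : ℤ))))
      atTop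
      (𝓝 (Real.exp (-γ*u*((K*(K-1) : ℕ) : ℝ)/2) *
        ∏ p ∈ Finset.univ.filter (fun p : Fin K × Fin K => p.1 < p.2),
          (ξ p.1 - ξ p.2) / (((p.2:ℕ) : ℝ) - ((p.1:ℕ) : ℝ)))) := by
  classical
  have hm : K * (K - 1) = 2 * (Finset.univ.filter (fun p : Fin K × Fin K => p.1 < p.2)).card :=
    card_pairs K
  set P := Finset.univ.filter (fun p : Fin K × Fin K => p.1 < p.2) with hP
  -- per-pair limits
  have hpair : ∀ p ∈ P, Tendsto (fun N : ℕ =>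
      (N:ℝ) ^ (-(1/2) : ℝ) *
        ((Real.exp (-γ/N)) ^ (⌊u*N + ξ p.1 * Real.sqrt N⌋ - (((p.1:ℕ)+1 : ℕ) : ℤ)) -
         (Real.exp (-γ/N)) ^ (⌊u*N + ξ p.2 * Real.sqrt N⌋ - (((p.2:ℕ)+1 : ℕ) : ℤ))) /
        ((Real.exp (-γ/N)) ^ (-((((p.1:ℕ)+1 : ℕ)) : ℤ)) -
         (Real.exp (-γ/N)) ^ (-((((p.2:ℕ)+1 : ℕ)) : ℤ))))
      atTop (𝓝 (Real.exp (-γ*u) * ((ξ p.1 - ξ p.2) / (((p.2:ℕ):ℝ) - ((p.1:ℕ):ℝ))))) := by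
    intro p hp
    rw [hP, Finset.mem_filter] at hp
    have hlt : ((p.1:ℕ)+1) < ((p.2:ℕ)+1) := by
      have : (p.1:ℕ) < (p.2:ℕ) := hp.2
      omega
    have h := pair_limit γ u (ξ p.1) (ξ p.2) hγ (hξ p.1 p.2 hp.2) ((p.1:ℕ)+1) ((p.2:ℕ)+1) hlt
    have hcast : ((((p.2:ℕ)+1 : ℕ)):ℝ) - ((((p.1:ℕ)+1 : ℕ)):ℝ) = ((p.2:ℕ):ℝ) - ((p.1:ℕ):ℝ) := by
      push_cast; ring
    rw [hcast] at h
    exact h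
  have hprod := tendsto_finset_prod P hpair
  -- rewrite the limit constant
  have hm' : ((K*(K-1) : ℕ) : ℝ) = 2 * (P.card : ℝ) := by
    rw [hP] at hm ⊢
    exact_mod_cast hm
  have hconst : (∏ p ∈ P, Real.exp (-γ*u) * ((ξ p.1 - ξ p.2) / (((p.2:ℕ):ℝ) - ((p.1:ℕ):ℝ))))
      = Real.exp (-γ*u*((K*(K-1) : ℕ) : ℝ)/2) *
        ∏ p ∈ P, (ξ p.1 - ξ p.2) / (((p.2:ℕ):ℝ) - ((p.1:ℕ):ℝ)) := by
    rw [Finset.prod_mul_distrib, Finset.prod_const]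
    congr 1
    rw [← Real.exp_nat_mul]
    congr 1
    rw [hm']
    ring
  rw [hconst] at hprod
  refine hprod.congr' ?_
  filter_upwards [eventually_ge_atTop 1] with N hN
  have hNpos : (0:ℝ) < N := by exact_mod_cast hN
  have hsplit : ∀ p ∈ P,
      (N:ℝ) ^ (-(1/2) : ℝ) *
        ((Real.exp (-γ/N)) ^ (⌊u*N + ξ p.1 * Real.sqrt N⌋ - (((p.1:ℕ)+1 : ℕ) : ℤ)) -
         (Real.exp (-γ/N)) ^ (⌊u*N + ξ p.2 * Real.sqrt N⌋ - (((p.2:ℕ)+1 : ℕ) : ℤ))) /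
        ((Real.exp (-γ/N)) ^ (-((((p.1:ℕ)+1 : ℕ)) : ℤ)) -
         (Real.exp (-γ/N)) ^ (-((((p.2:ℕ)+1 : ℕ)) : ℤ)))
      = (N:ℝ) ^ (-(1/2) : ℝ) *
        (((Real.exp (-γ/N)) ^ (⌊u*N + ξ p.1 * Real.sqrt N⌋ - (((p.1:ℕ)+1 : ℕ) : ℤ)) -
          (Real.exp (-γ/N)) ^ (⌊u*N + ξ p.2 * Real.sqrt N⌋ - (((p.2:ℕ)+1 : ℕ) : ℤ))) /
         ((Real.exp (-γ/N)) ^ (-((((p.1:ℕ)+1 : ℕ)) : ℤ)) -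
          (Real.exp (-γ/N)) ^ (-((((p.2:ℕ)+1 : ℕ)) : ℤ)))) :=
    fun p _ => mul_div_assoc _ _ _
  rw [Finset.prod_congr rfl hsplit, Finset.prod_mul_distrib, Finset.prod_const]
  congr 1
  rw [← Real.rpow_natCast ((N:ℝ) ^ (-(1/2) : ℝ)) P.card, ← Real.rpow_mul hNpos.le]
  congr 1
  rw [show -(((K*(K-1) : ℕ) : ℝ))/4 = -((K*(K-1) : ℕ) : ℝ)/4 by ring, hm']
  ring
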